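/- (Conservation of the charge Q₁ under the linearized null constraint equations, §3.3, eq. (3.1).) Under the linearized first variation and Raychaudhuri equations, the charge Q₁(r) := (r/2)·(a(r) − (4/r)·Ω̇(r)) + φ̇(r)/r is constant on I. -/

import Mathlib

/-- (Conservation of the charge `Q₁` under the linearized null
constraint equations at Minkowski.) Let `I ⊆ (0,∞)` be an interval and let
`φ̇, Ω̇, a : ℝ → ℝ` be (smooth) functions satisfying on `I` the linearized first
variation equation `φ̇'(r) = (r/2)·a(r) + φ̇(r)/r` and the linearized Raychaudhuri
equation `a'(r) + (2/r)·a(r) = (4/r)·Ω̇'(r)`. Then the charge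
`Q₁(r) := (r/2)·(a(r) - (4/r)·Ω̇(r)) + φ̇(r)/r` is constant on `I`. -/
theorem charge_Q1_conserved
    (I : Set ℝ) (hI : I.OrdConnected) (hIpos : I ⊆ Set.Ioi (0 : ℝ))
    (φdot Ωdot a Ωdot' : ℝ → ℝ)
    (hΩdot : ∀ r ∈ I, HasDerivAt Ωdot (Ωdot' r) r)
    -- linearized first variation equation `φ̇'(r) = (r/2)·a(r) + φ̇(r)/r`
    (hfirstvar : ∀ r ∈ I, HasDerivAt φdot ((r / 2) * a r + φdot r / r) r)
    -- linearized Raychaudhuri equation `a'(r) + (2/r)·a(r) = (4/r)·Ω̇'(r)`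
    (hray : ∀ r ∈ I, HasDerivAt a ((4 / r) * Ωdot' r - (2 / r) * a r) r) :
    ∀ r ∈ I, ∀ s ∈ I,
      (r / 2) * (a r - (4 / r) * Ωdot r) + φdot r / r
        = (s / 2) * (a s - (4 / s) * Ωdot s) + φdot s / s := by
  set Q : ℝ → ℝ := fun r => (r / 2) * (a r - (4 / r) * Ωdot r) + φdot r / r with hQ
  have hderiv : ∀ r ∈ I, HasDerivAt Q 0 r := by
    intro r hr
    have hrpos : (0:ℝ) < r := hIpos hr
    have hrne : r ≠ 0 := ne_of_gt hrpos
    have h1 : HasDerivAt (fun r => (r / 2) * a r - 2 * Ωdot r + φdot r / r)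
        ((1 / 2) * a r + (r / 2) * ((4 / r) * Ωdot' r - (2 / r) * a r)
          - 2 * Ωdot' r
          + (((r / 2) * a r + φdot r / r) * r - φdot r * 1) / r ^ 2) r := by
      exact (((hasDerivAt_id r).div_const 2).mul (hray r hr)).sub
        ((hΩdot r hr).const_mul 2) |>.add ((hfirstvar r hr).div (hasDerivAt_id r) hrne)
    have heq : Q =ᶠ[nhds r] (fun r => (r / 2) * a r - 2 * Ωdot r + φdot r / r) := by
      filter_upwards [eventually_ne_nhds hrne] with x hx
      simp only [hQ]; field_simp; ring
    have h2 := h1.congr_of_eventuallyEq heq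
    refine h2.congr_deriv ?_
    field_simp
    ring
  intro r hr s hs
  have h := (hI.convex).norm_image_sub_le_of_norm_hasDerivWithin_le
    (f' := fun _ => (0:ℝ)) (C := 0) (fun x hx => (hderiv x hx).hasDerivWithinAt)
    (fun x _ => by simp) hs hr
  have : Q r = Q s := by
    have := le_antisymm (by simpa using h) (norm_nonneg (Q r - Q s))
    rwa [norm_eq_zero, sub_eq_zero] at this
  simpa [hQ] using this
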